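/- Let θ be an n-cycle in S_n, θ* its doubling, ρ_s = (2s−1, 2s), and η = θ* ∘ ρ_{i_1} ∘ ⋯ ∘ ρ_{i_m} with distinct indices i_1 < ⋯ < i_m. If m is odd, then η is a 2n-cycle in S_{2n}; if m is even, then η is not a 2n-cycle. -/

import Mathlib

/-- `σ` is a single cycle through all of `Fin N` (an `N`-cycle). -/
def IsFullCycle {N : ℕ} (σ : Equiv.Perm (Fin N)) : Prop :=
  ∃ x : Fin N, ∀ y : Fin N, ∃ k : ℕ, (σ ^ k) x = y

/-- The equivalence packing a pair `(k, p)` as `2k + p`, so that (in 1-based terms)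
the pair `{2k-1, 2k}` corresponds to `k`. -/
def pairEquiv (n : ℕ) : Fin n × Fin 2 ≃ Fin (2 * n) where
  toFun p := ⟨2 * p.1.1 + p.2.1, by have := p.1.isLt; have := p.2.isLt; omega⟩
  invFun j := (⟨j.1 / 2, by have := j.isLt; omega⟩, ⟨j.1 % 2, by omega⟩)
  left_inv p := by
    obtain ⟨⟨a, ha⟩, ⟨b, hb⟩⟩ := p
    refine Prod.ext (Fin.ext ?_) (Fin.ext ?_) <;> simp <;> omega
  right_inv j := by
    apply Fin.ext; simp; omega

/-- The doubling `θ*` of a permutation `θ` of `{1,…,n}`: in 1-based terms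
`θ*(2k) = 2θ(k)` and `θ*(2k-1) = 2θ(k)-1`. -/
def doublePerm {n : ℕ} (θ : Equiv.Perm (Fin n)) : Equiv.Perm (Fin (2 * n)) :=
  (pairEquiv n).permCongr (θ.prodCongr (Equiv.refl (Fin 2)))

/-- The transposition `ρ_s = (2s-1, 2s)` (1-based), i.e. swapping `2s` and `2s+1` (0-based). -/
def rho {n : ℕ} (s : Fin n) : Equiv.Perm (Fin (2 * n)) :=
  Equiv.swap ⟨2 * s.1, by have := s.isLt; omega⟩ ⟨2 * s.1 + 1, by have := s.isLt; omega⟩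

lemma rho_comm {n : ℕ} (s t : Fin n) : Commute (rho s) (rho t) := by
  rcases eq_or_ne s t with rfl | hst
  · exact Commute.refl _
  · have h : s.1 ≠ t.1 := fun h => hst (Fin.ext h)
    apply Equiv.Perm.Disjoint.commute
    intro x
    by_cases hx : x.1 = 2 * s.1 ∨ x.1 = 2 * s.1 + 1
    · right
      exact Equiv.swap_apply_of_ne_of_ne (Fin.ne_of_val_ne (by simp; omega))
        (Fin.ne_of_val_ne (by simp; omega))
    · left
      push_neg at hx
      exact Equiv.swap_apply_of_ne_of_ne (Fin.ne_of_val_ne (by simpa using hx.1))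
        (Fin.ne_of_val_ne (by simpa using hx.2))

/-! ### Auxiliary lemmas -/

/-- Indicator of membership in `l`, valued in `Fin 2`. -/
def epsAux {n : ℕ} (l : List (Fin n)) (k : Fin n) : Fin 2 := if k ∈ l then 1 else 0

lemma pairEquiv_val_aux {n : ℕ} (k : Fin n) (q : Fin 2) :
    (pairEquiv n (k, q)).1 = 2 * k.1 + q.1 := rfl

lemma rho_apply_same_aux {n : ℕ} (k : Fin n) (p : Fin 2) :
    rho k (pairEquiv n (k, p)) = pairEquiv n (k, p + 1) := by
  have hp : p.1 = 0 ∨ p.1 = 1 := by omega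
  rcases hp with h | h
  · have hp0 : p = 0 := Fin.ext h
    subst hp0
    have e0 : pairEquiv n (k, (0:Fin 2)) = ⟨2 * k.1, by have := k.isLt; omega⟩ :=
      Fin.ext (by simp [pairEquiv_val_aux])
    have e1 : pairEquiv n (k, (0:Fin 2) + 1) = ⟨2 * k.1 + 1, by have := k.isLt; omega⟩ :=
      Fin.ext (by simp [pairEquiv_val_aux])
    rw [e0, e1, rho, Equiv.swap_apply_left]
  · have hp0 : p = 1 := Fin.ext h
    subst hp0
    have e0 : pairEquiv n (k, (1:Fin 2)) = ⟨2 * k.1 + 1, by have := k.isLt; omega⟩ :=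
      Fin.ext (by simp [pairEquiv_val_aux])
    have e1 : pairEquiv n (k, (1:Fin 2) + 1) = ⟨2 * k.1, by have := k.isLt; omega⟩ :=
      Fin.ext (by simp [pairEquiv_val_aux])
    rw [e0, e1, rho, Equiv.swap_apply_right]

lemma rho_apply_ne_aux {n : ℕ} (a k : Fin n) (hka : k ≠ a) (p : Fin 2) :
    rho a (pairEquiv n (k, p)) = pairEquiv n (k, p) := by
  have hv : k.1 ≠ a.1 := fun h => hka (Fin.ext h)
  have hq := p.isLt
  apply Equiv.swap_apply_of_ne_of_ne <;>
    (apply Fin.ne_of_val_ne; rw [pairEquiv_val_aux]; simp; omega)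

lemma doublePerm_apply_aux {n : ℕ} (θ : Equiv.Perm (Fin n)) (k : Fin n) (q : Fin 2) :
    doublePerm θ (pairEquiv n (k, q)) = pairEquiv n (θ k, q) := by
  simp [doublePerm, Equiv.permCongr_apply, Equiv.symm_apply_apply]

lemma rho_prod_apply_aux {n : ℕ} (l : List (Fin n)) (hl : l.Nodup) (k : Fin n) (p : Fin 2) :
    (l.map rho).prod (pairEquiv n (k, p)) = pairEquiv n (k, p + epsAux l k) := by
  induction l with
  | nil => simp [epsAux]
  | cons a l ih =>
    have hna : a ∉ l := (List.nodup_cons.mp hl).1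
    have hnd : l.Nodup := (List.nodup_cons.mp hl).2
    have hm : ((a :: l).map rho).prod = rho a * (l.map rho).prod := by simp
    rw [hm, Equiv.Perm.mul_apply, ih hnd]
    rcases eq_or_ne k a with rfl | hka
    · have he : epsAux l k = 0 := by simp [epsAux, hna]
      have he2 : epsAux (k :: l) k = 1 := by simp [epsAux]
      rw [he, he2, add_zero, rho_apply_same_aux]
    · have he : epsAux (a :: l) k = epsAux l k := by simp [epsAux, hka]
      rw [he, rho_apply_ne_aux a k hka]

lemma eta_pow_apply_aux {n : ℕ} (θ : Equiv.Perm (Fin n)) (l : List (Fin n)) (hl : l.Nodup)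
    (j : ℕ) (k : Fin n) (p : Fin 2) :
    ((doublePerm θ * (l.map rho).prod) ^ j) (pairEquiv n (k, p)) =
      pairEquiv n ((θ ^ j) k, p + ∑ t ∈ Finset.range j, epsAux l ((θ ^ t) k)) := by
  induction j with
  | zero => simp
  | succ j ih =>
    rw [pow_succ', Equiv.Perm.mul_apply, ih, Equiv.Perm.mul_apply,
      rho_prod_apply_aux l hl, doublePerm_apply_aux, Finset.sum_range_succ, ← add_assoc]
    congr 1
    rw [pow_succ', Equiv.Perm.mul_apply]

lemma pow_fixed_aux {β : Type*} (σ : Equiv.Perm β) (z : β) (m : ℕ) (h : (σ ^ m) z = z) (q : ℕ) :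
    ((σ ^ m) ^ q) z = z := by
  induction q with
  | zero => simp
  | succ q ih => rw [pow_succ', Equiv.Perm.mul_apply, ih, h]

lemma pow_apply_mod_aux {β : Type*} (σ : Equiv.Perm β) (z : β) (m : ℕ)
    (h : (σ ^ m) z = z) (k : ℕ) : (σ ^ k) z = (σ ^ (k % m)) z := by
  conv_lhs => rw [← Nat.mod_add_div k m, pow_add, pow_mul, Equiv.Perm.mul_apply,
    pow_fixed_aux σ z m h]

lemma full_cycle_pow_eq_one_aux {n : ℕ} (θ : Equiv.Perm (Fin n)) (hθ : IsFullCycle θ) :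
    θ ^ n = 1 ∧ ∀ k : Fin n, Function.Bijective (fun t : Fin n => (θ ^ t.1) k) := by
  classical
  obtain ⟨x, hx⟩ := hθ
  have hn : 0 < n := x.pos
  have hexn : ∃ d, (0 < d ∧ (θ ^ d) x = x) ∧ d ≤ n := by
    have hni : ¬ Function.Injective (fun t : Fin (n+1) => (θ ^ t.1) x) := by
      intro hinj
      have := Fintype.card_le_of_injective _ hinj
      simp at this
    rw [Function.not_injective_iff] at hni
    obtain ⟨i, j, hij, hne⟩ := hni
    rcases Ne.lt_or_gt hne with h | h
    · refine ⟨j.1 - i.1, ⟨by omega, ?_⟩, by omega⟩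
      have : (θ ^ i.1) ((θ ^ (j.1 - i.1)) x) = (θ ^ i.1) x := by
        rw [← Equiv.Perm.mul_apply, ← pow_add, show i.1 + (j.1 - i.1) = j.1 by omega]
        exact hij.symm
      exact (θ ^ i.1).injective this
    · refine ⟨i.1 - j.1, ⟨by omega, ?_⟩, by omega⟩
      have : (θ ^ j.1) ((θ ^ (i.1 - j.1)) x) = (θ ^ j.1) x := by
        rw [← Equiv.Perm.mul_apply, ← pow_add, show j.1 + (i.1 - j.1) = i.1 by omega]
        exact hij
      exact (θ ^ j.1).injective this
  obtain ⟨d, hd, hdn⟩ := hexn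
  have hex : ∃ d, 0 < d ∧ (θ ^ d) x = x := ⟨d, hd⟩
  set p0 := Nat.find hex with hp0def
  have hp0 : 0 < p0 ∧ (θ ^ p0) x = x := Nat.find_spec hex
  have hle : p0 ≤ n := le_trans (Nat.find_le hd) hdn
  have hsurj : Function.Surjective (fun t : Fin p0 => (θ ^ t.1) x) := by
    intro y
    obtain ⟨k, hk⟩ := hx y
    exact ⟨⟨k % p0, Nat.mod_lt _ hp0.1⟩, by
      simpa using (pow_apply_mod_aux θ x p0 hp0.2 k).symm.trans hk⟩
  have hnp : n ≤ p0 := by simpa using Fintype.card_le_of_surjective _ hsurj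
  have hpn : p0 = n := le_antisymm hle hnp
  have hxn : (θ ^ n) x = x := by have h := hp0.2; rwa [hpn] at h
  have hinjx : Function.Injective (fun t : Fin n => (θ ^ t.1) x) := by
    intro t1 t2 h
    by_contra hne
    have hne' : t1.1 ≠ t2.1 := fun hh => hne (Fin.ext hh)
    rcases Nat.lt_or_ge t1.1 t2.1 with hlt | hge
    · have hfix : (θ ^ (t2.1 - t1.1)) x = x := by
        apply (θ ^ t1.1).injective
        rw [← Equiv.Perm.mul_apply, ← pow_add, show t1.1 + (t2.1 - t1.1) = t2.1 by omega]
        exact h.symm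
      exact Nat.find_min hex (by omega : t2.1 - t1.1 < p0) ⟨by omega, hfix⟩
    · have hlt2 : t2.1 < t1.1 := by omega
      have hfix : (θ ^ (t1.1 - t2.1)) x = x := by
        apply (θ ^ t2.1).injective
        rw [← Equiv.Perm.mul_apply, ← pow_add, show t2.1 + (t1.1 - t2.1) = t1.1 by omega]
        exact h
      exact Nat.find_min hex (by omega : t1.1 - t2.1 < p0) ⟨by omega, hfix⟩
  have hone : θ ^ n = 1 := by
    ext y
    obtain ⟨k, hk⟩ := hx y
    rw [Equiv.Perm.one_apply, ← hk, ← Equiv.Perm.mul_apply, ← pow_add, add_comm, pow_add,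
      Equiv.Perm.mul_apply, hxn]
  refine ⟨hone, fun k => ?_⟩
  rw [← Finite.injective_iff_bijective]
  obtain ⟨a, ha⟩ := hx k
  intro t1 t2 h
  simp only at h
  have h2 : (θ ^ ((t1.1 + a) % n)) x = (θ ^ ((t2.1 + a) % n)) x := by
    rw [← pow_apply_mod_aux θ x n hxn, ← pow_apply_mod_aux θ x n hxn, pow_add, pow_add,
      Equiv.Perm.mul_apply, Equiv.Perm.mul_apply, ha]
    exact h
  have h3 : (⟨(t1.1 + a) % n, Nat.mod_lt _ hn⟩ : Fin n) = ⟨(t2.1 + a) % n, Nat.mod_lt _ hn⟩ :=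
    hinjx h2
  have h4 : (t1.1 + a) % n = (t2.1 + a) % n := congrArg Fin.val h3
  have h5 : t1.1 % n = t2.1 % n := Nat.ModEq.add_right_cancel' a h4
  rw [Nat.mod_eq_of_lt t1.isLt, Nat.mod_eq_of_lt t2.isLt] at h5
  exact Fin.ext h5

open Fin.NatCast

lemma sum_epsAux {n : ℕ} (l : List (Fin n)) (hl : l.Nodup) (e : Fin n → Fin n)
    (he : Function.Bijective e) :
    ∑ t : Fin n, epsAux l (e t) = (l.length : Fin 2) := by
  classical
  rw [Fintype.sum_bijective e he _ (epsAux l) (fun _ => rfl)]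
  unfold epsAux
  rw [Finset.sum_ite, Finset.sum_const_zero, add_zero, Finset.sum_const]
  rw [← List.toFinset_card_of_nodup hl]
  have hf : Finset.univ.filter (fun x => x ∈ l) = l.toFinset := by ext y; simp
  rw [hf]
  exact nsmul_one _

lemma odd_cast_aux {m : ℕ} (h : Odd m) : (m : Fin 2) = 1 := by
  obtain ⟨k, rfl⟩ := h
  push_cast
  simp

lemma even_cast_aux {m : ℕ} (h : Even m) : (m : Fin 2) = 0 := by
  obtain ⟨k, rfl⟩ := h
  push_cast
  rw [show ((k : Fin 2) + k) = 2 * k by omega]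
  simp

/-- Let `θ` be an `n`-cycle and `η = θ* ∘ ρ_{i_1} ∘ ⋯ ∘ ρ_{i_m}` with distinct indices.
If `m` is odd then `η` is a `2n`-cycle; if `m` is even then `η` is not a `2n`-cycle. -/
theorem doubling_isCycle_iff_odd {n : ℕ} (θ : Equiv.Perm (Fin n)) (hθ : IsFullCycle θ)
    (l : List (Fin n)) (hl : l.Pairwise (· < ·)) :
    (Odd l.length → IsFullCycle (doublePerm θ * (l.map rho).prod)) ∧
    (Even l.length → ¬ IsFullCycle (doublePerm θ * (l.map rho).prod)) := by
  classical
  obtain ⟨hone, hbij⟩ := full_cycle_pow_eq_one_aux θ hθ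
  have hnd : l.Nodup := hl.nodup
  set η := doublePerm θ * (l.map rho).prod with hη
  obtain ⟨x, hx⟩ := hθ
  have hn : 0 < n := x.pos
  have hS : ∀ k : Fin n, ∑ t ∈ Finset.range n, epsAux l ((θ ^ t) k) = (l.length : Fin 2) := by
    intro k
    rw [Finset.sum_range fun t => epsAux l ((θ ^ t) k)]
    exact sum_epsAux l hnd _ (hbij k)
  have hηn : ∀ (k : Fin n) (p : Fin 2),
      (η ^ n) (pairEquiv n (k, p)) = pairEquiv n (k, p + (l.length : Fin 2)) := by
    intro k p
    rw [eta_pow_apply_aux θ l hnd, hS, hone]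
    simp
  constructor
  · intro hodd
    have h1 : (l.length : Fin 2) = 1 := odd_cast_aux hodd
    refine ⟨pairEquiv n (x, 0), fun y => ?_⟩
    have hy : y = pairEquiv n (((pairEquiv n).symm y).1, ((pairEquiv n).symm y).2) := by
      simp
    obtain ⟨t, ht⟩ := hx ((pairEquiv n).symm y).1
    have hTt := eta_pow_apply_aux θ l hnd t x 0
    rcases eq_or_ne ((0:Fin 2) + ∑ s ∈ Finset.range t, epsAux l ((θ ^ s) x))
        ((pairEquiv n).symm y).2 with hc | hc
    · exact ⟨t, by rw [hTt, ht, hc, ← hy]⟩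
    · refine ⟨n + t, ?_⟩
      rw [pow_add, Equiv.Perm.mul_apply, hTt, ht, hηn, h1]
      conv_rhs => rw [hy]
      exact congrArg (pairEquiv n)
        (Prod.ext rfl ((by decide : ∀ c q : Fin 2, c ≠ q → c + 1 = q) _ _ hc))
  · intro heven hfull
    have h0 : (l.length : Fin 2) = 0 := even_cast_aux heven
    have hηn1 : η ^ n = 1 := by
      ext y
      have hy : y = pairEquiv n (((pairEquiv n).symm y).1, ((pairEquiv n).symm y).2) := by
        simp
      rw [Equiv.Perm.one_apply]
      conv_lhs => rw [hy]
      rw [hηn, h0, add_zero, ← hy]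
    obtain ⟨z, hz⟩ := hfull
    have hzfix : (η ^ n) z = z := by rw [hηn1]; rfl
    have hsurj : Function.Surjective (fun t : Fin n => (η ^ t.1) z) := by
      intro y
      obtain ⟨j, hj⟩ := hz y
      exact ⟨⟨j % n, Nat.mod_lt _ hn⟩, by
        simpa using (pow_apply_mod_aux η z n hzfix j).symm.trans hj⟩
    have hcard := Fintype.card_le_of_surjective _ hsurj
    simp at hcard
    omega
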